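/- Let w : [0,∞) → ℝ be convex with inf over (0,∞) of the minimal subgradient ∂°w equal to Ω > 0. Consider N particles x₁(t),…,x_N(t) in ℝ^d evolving by ẋᵢ = −(1/N) Σ_{j≠i} ∂°w(|xᵢ−x_j|) (xᵢ−x_j)/|xᵢ−x_j|, with fixed center of mass x₀. Then R(t) := max_i |xᵢ(t) − x₀| satisfies (1/2) d/dt R²(t) ≤ −(Ω/(2N)) R(t) at a.e. time, hence all particles collapse to x₀ in finite time. -/

import Mathlib

open scoped RealInnerProductSpace
open Filter MeasureTheory

/-- Derivative of squared truncated linear function. -/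
lemma sq_max_hasDerivAt (c k : ℝ) (s : ℝ) :
    HasDerivAt (fun u => (max (c - k * u) 0) ^ 2) (-2 * k * max (c - k * s) 0) s := by
  rcases lt_trichotomy (c - k * s) 0 with h | h | h
  · have hev : (fun u => (max (c - k * u) 0) ^ 2) =ᶠ[nhds s] fun _ => (0:ℝ) := by
      have hc : Continuous fun u => c - k * u := by continuity
      filter_upwards [hc.continuousAt.eventually_lt continuous_const.continuousAt h] with u hu
      rw [max_eq_right hu.le]; norm_num
    rw [max_eq_right h.le, mul_zero]
    exact (hasDerivAt_const s (0:ℝ)).congr_of_eventuallyEq hev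
  · rw [h, max_self, mul_zero]
    rw [hasDerivAt_iff_isLittleO]
    have hb : ∀ u : ℝ, (max (c - k * u) 0) ^ 2 ≤ (k^2) * (u - s)^2 := by
      intro u
      have h1 : c - k * u = k * (s - u) := by nlinarith [h]
      have h2 : max (c - k * u) 0 ≤ |k| * |s - u| := by
        apply max_le
        · rw [h1]; calc k * (s - u) ≤ |k * (s-u)| := le_abs_self _
            _ = |k| * |s - u| := abs_mul _ _
        · positivity
      calc (max (c - k * u) 0)^2 ≤ (|k| * |s - u|)^2 := by
            apply pow_le_pow_left₀ (le_max_right _ _) h2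
        _ = k^2 * (u - s)^2 := by rw [mul_pow, sq_abs, sq_abs]; ring_nf
    rw [Asymptotics.isLittleO_iff]
    intro ε hε
    have hδ : (0:ℝ) < ε / (k^2 + 1) := by positivity
    filter_upwards [eventually_abs_sub_lt s hδ] with u hu
    have h0 : max (c - k * s) 0 = 0 := by rw [h, max_self]
    simp only [h0, smul_zero, sub_zero, Real.norm_eq_abs]
    rw [show ((max (c - k * u) 0) ^ 2 - 0^2) = (max (c - k * u) 0)^2 by ring,
      abs_of_nonneg (by positivity : (0:ℝ) ≤ (max (c - k * u) 0)^2)]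
    calc (max (c - k * u) 0) ^ 2 ≤ k^2 * (u - s)^2 := hb u
      _ = (k^2 * |u - s|) * |u - s| := by
          rw [show (k^2 * |u-s|) * |u-s| = k^2 * (|u-s|^2) by ring, sq_abs]
      _ ≤ (k^2 * (ε / (k^2+1))) * |u - s| := by
          apply mul_le_mul_of_nonneg_right _ (abs_nonneg _)
          exact mul_le_mul_of_nonneg_left hu.le (by positivity)
      _ ≤ ε * |u - s| := by
          apply mul_le_mul_of_nonneg_right _ (abs_nonneg _)
          rw [div_eq_mul_inv]
          calc k^2 * (ε * (k^2+1)⁻¹) = ε * (k^2 / (k^2+1)) := by ring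
            _ ≤ ε * 1 := by
                apply mul_le_mul_of_nonneg_left _ hε.le
                rw [div_le_one (by positivity)]; linarith
            _ = ε := mul_one ε
  · have hev : (fun u => (max (c - k * u) 0) ^ 2) =ᶠ[nhds s] fun u => (c - k * u) ^ 2 := by
      have hc : Continuous fun u => c - k * u := by continuity
      filter_upwards [continuous_const.continuousAt.eventually_lt hc.continuousAt h] with u hu
      rw [max_eq_left hu.le]
    rw [max_eq_left h.le]
    have h1 : HasDerivAt (fun u => c - k * u) (-k) s := by
      simpa using ((hasDerivAt_id s).const_mul k).const_sub c
    have h2 : HasDerivAt (fun u => (c - k * u) ^ 2) (2 * (c - k * s) * (-k)) s := by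
      simpa using h1.fun_pow 2
    have h3 := h2.congr_of_eventuallyEq hev
    exact h3.congr_deriv (by ring)

set_option maxHeartbeats 1000000 in
theorem stmt14 (d N : ℕ) (hN : 0 < N) (w : ℝ → ℝ)
    (hw : ConvexOn ℝ (Set.Ici 0) w)
    (g : ℝ → ℝ)
    (hg : ∀ r : ℝ, 0 < r → ∀ s : ℝ, 0 ≤ s → w s - w r ≥ g r * (s - r))
    (hgmin : ∀ r : ℝ, 0 < r → ∀ ξ : ℝ,
      (∀ s : ℝ, 0 ≤ s → w s - w r ≥ ξ * (s - r)) → |g r| ≤ |ξ|)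
    (Om : ℝ) (hOm : 0 < Om) (hOminf : IsGLB {y : ℝ | ∃ r : ℝ, 0 < r ∧ y = g r} Om)
    (x : ℝ → Fin N → EuclideanSpace ℝ (Fin d)) (x0 : EuclideanSpace ℝ (Fin d))
    (hode : ∀ t : ℝ, ∀ i : Fin N, HasDerivAt (fun s => x s i)
      (-(1 / (N : ℝ)) • ∑ j ∈ Finset.univ.erase i,
        (g ‖x t i - x t j‖ / ‖x t i - x t j‖) • (x t i - x t j)) t)
    (hcm : ∀ t : ℝ, (1 / (N : ℝ)) • ∑ i : Fin N, x t i = x0) :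
    (∀ᵐ t : ℝ ∂(volume : Measure ℝ), ∀ D : ℝ,
      HasDerivAt (fun s => (⨆ i : Fin N, ‖x s i - x0‖) ^ 2) D t →
        (1/2) * D ≤ -(Om / (2 * (N : ℝ))) * ⨆ i : Fin N, ‖x t i - x0‖) ∧
    ∃ T : ℝ, ∀ t ≥ T, ∀ i : Fin N, x t i = x0 := by
  have hNe : Nonempty (Fin N) := ⟨⟨0, hN⟩⟩
  have hN0 : (N:ℝ) ≠ 0 := Nat.cast_ne_zero.2 hN.ne'
  have hN1 : (1:ℝ) ≤ (N:ℝ) := by exact_mod_cast hN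
  set v : Fin N → ℝ → EuclideanSpace ℝ (Fin d) := fun i t =>
    -(1 / (N : ℝ)) • ∑ j ∈ Finset.univ.erase i,
      (g ‖x t i - x t j‖ / ‖x t i - x t j‖) • (x t i - x t j) with hv
  set R : ℝ → ℝ := fun s => ⨆ i : Fin N, ‖x s i - x0‖ with hRdef
  set F : ℝ → ℝ := fun s => (R s) ^ 2 with hFdef
  have hbdd : ∀ s : ℝ, BddAbove (Set.range fun i : Fin N => ‖x s i - x0‖) := fun s =>
    Set.Finite.bddAbove (Set.finite_range _)
  have hle : ∀ s (i : Fin N), ‖x s i - x0‖ ≤ R s := fun s i => le_ciSup (hbdd s) i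
  have hR0 : ∀ s, 0 ≤ R s := fun s => le_trans (norm_nonneg _) (hle s ⟨0, hN⟩)
  have hF0 : ∀ s, 0 ≤ F s := fun s => sq_nonneg _
  have hFf : ∀ s (i : Fin N), ‖x s i - x0‖ ^ 2 ≤ F s := fun s i =>
    pow_le_pow_left₀ (norm_nonneg _) (hle s i) 2
  have hmaxR : ∀ s, ∃ i : Fin N, R s = ‖x s i - x0‖ := by
    intro s
    obtain ⟨i, hi⟩ := Finite.exists_max (fun k : Fin N => ‖x s k - x0‖)
    exact ⟨i, le_antisymm (ciSup_le hi) (hle s i)⟩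
  -- continuity
  have hxc : ∀ i : Fin N, Continuous fun s => ‖x s i - x0‖ := by
    intro i
    have : Continuous fun s => x s i :=
      continuous_iff_continuousAt.2 fun t => (hode t i).continuousAt
    exact (this.sub continuous_const).norm
  have hRc : Continuous R := by
    have : R = fun s => Finset.univ.sup' (Finset.univ_nonempty) fun i : Fin N => ‖x s i - x0‖ := by
      funext s
      rw [hRdef]
      exact (Finset.sup'_univ_eq_ciSup _).symm
    rw [this]
    exact Continuous.finset_sup'_apply _ fun i _ => hxc i
  have hFc : Continuous F := hRc.pow 2
  -- the ODE derivative of each squared norm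
  have hderiv : ∀ (t : ℝ) (i : Fin N),
      HasDerivAt (fun s => ‖x s i - x0‖ ^ 2) (2 * ⟪x t i - x0, v i t⟫) t := by
    intro t i
    have h1 : HasDerivAt (fun s => x s i - x0) (v i t) t := (hode t i).sub_const x0
    have h2 := h1.inner ℝ h1
    have h3 : (fun s => ⟪x s i - x0, x s i - x0⟫) = fun s => ‖x s i - x0‖ ^ 2 := by
      funext s; exact real_inner_self_eq_norm_sq _
    rw [h3] at h2
    refine h2.congr_deriv ?_
    rw [real_inner_comm (v i t)]
    ring
  -- the key dissipation bound at a maximizer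
  have hOmle : ∀ r : ℝ, 0 < r → Om ≤ g r := fun r hr => hOminf.1 ⟨r, hr, rfl⟩
  have key : ∀ (t : ℝ) (i : Fin N), (∀ k, ‖x t k - x0‖ ≤ ‖x t i - x0‖) →
      2 * ⟪x t i - x0, v i t⟫ ≤ -Om * ‖x t i - x0‖ := by
    intro t i hmax
    have hterm : ∀ j ∈ Finset.univ.erase i,
        (Om/2) * ‖x t i - x t j‖ ≤
          (g ‖x t i - x t j‖ / ‖x t i - x t j‖) * ⟪x t i - x0, x t i - x t j⟫ := by
      intro j _
      set r := ‖x t i - x t j‖ with hr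
      rcases eq_or_lt_of_le (norm_nonneg (x t i - x t j)) with h0 | hpos
      · have h0' : r = 0 := h0.symm
        rw [h0']
        simp
      · have hinner : r^2/2 ≤ ⟪x t i - x0, x t i - x t j⟫ := by
          have he : x t i - x t j = (x t i - x0) - (x t j - x0) := by abel
          have hn := norm_sub_sq_real (x t i - x0) (x t j - x0)
          have hi2 : ⟪x t i - x0, x t i - x t j⟫
              = ‖x t i - x0‖^2 - ⟪x t i - x0, x t j - x0⟫ := by
            rw [he, inner_sub_right, real_inner_self_eq_norm_sq]
          have hmj : ‖x t j - x0‖ ≤ ‖x t i - x0‖ := hmax j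
          have hrn : r = ‖(x t i - x0) - (x t j - x0)‖ := by rw [← he]
          rw [← hrn] at hn
          have hsq : ‖x t j - x0‖^2 ≤ ‖x t i - x0‖^2 :=
            pow_le_pow_left₀ (norm_nonneg _) hmj 2
          linarith [hn, hi2, hsq]
        have hg1 : Om ≤ g r := hOmle r hpos
        have hgr : 0 < g r / r := div_pos (lt_of_lt_of_le hOm hg1) hpos
        calc (Om/2) * r ≤ (g r) * r / 2 := by nlinarith
          _ = (g r / r) * (r^2/2) := by field_simp
          _ ≤ (g r / r) * ⟪x t i - x0, x t i - x t j⟫ :=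
              mul_le_mul_of_nonneg_left hinner hgr.le
    have hsumvec : ∑ j ∈ Finset.univ.erase i, (x t i - x t j)
        = (N:ℝ) • (x t i - x0) := by
      have h1 : ∑ j ∈ Finset.univ.erase i, (x t i - x t j)
          = ∑ j : Fin N, (x t i - x t j) := by
        apply Finset.sum_erase
        simp
      have h2 : ∑ j : Fin N, x t j = (N:ℝ) • x0 := by
        have := hcm t
        have h3 := congrArg (fun z => (N:ℝ) • z) this
        simp only [smul_smul] at h3
        rw [mul_one_div, div_self hN0, one_smul] at h3
        exact h3
      rw [h1, Finset.sum_sub_distrib, Finset.sum_const, h2, Finset.card_univ,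
        Fintype.card_fin, smul_sub]
      simp [← Nat.cast_smul_eq_nsmul ℝ]
    have hsumnorm : (N:ℝ) * ‖x t i - x0‖ ≤ ∑ j ∈ Finset.univ.erase i, ‖x t i - x t j‖ := by
      calc (N:ℝ) * ‖x t i - x0‖ = ‖(N:ℝ) • (x t i - x0)‖ := by
            rw [norm_smul, Real.norm_eq_abs, abs_of_nonneg (Nat.cast_nonneg N)]
        _ = ‖∑ j ∈ Finset.univ.erase i, (x t i - x t j)‖ := by rw [hsumvec]
        _ ≤ ∑ j ∈ Finset.univ.erase i, ‖x t i - x t j‖ := norm_sum_le _ _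
    have hip : ⟪x t i - x0, v i t⟫
        = -(1/(N:ℝ)) * ∑ j ∈ Finset.univ.erase i,
            (g ‖x t i - x t j‖ / ‖x t i - x t j‖) * ⟪x t i - x0, x t i - x t j⟫ := by
      rw [hv]
      simp only [inner_smul_right, inner_sum]
    have hsum_ge : (Om/2) * ((N:ℝ) * ‖x t i - x0‖)
        ≤ ∑ j ∈ Finset.univ.erase i,
            (g ‖x t i - x t j‖ / ‖x t i - x t j‖) * ⟪x t i - x0, x t i - x t j⟫ := by
      calc (Om/2) * ((N:ℝ) * ‖x t i - x0‖)
          ≤ (Om/2) * ∑ j ∈ Finset.univ.erase i, ‖x t i - x t j‖ :=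
            mul_le_mul_of_nonneg_left hsumnorm (by positivity)
        _ = ∑ j ∈ Finset.univ.erase i, (Om/2) * ‖x t i - x t j‖ := Finset.mul_sum _ _ _
        _ ≤ _ := Finset.sum_le_sum hterm
    rw [hip]
    have hNpos : (0:ℝ) < (N:ℝ) := by positivity
    rw [show (2:ℝ) * (-(1/(N:ℝ)) * ∑ j ∈ Finset.univ.erase i,
        (g ‖x t i - x t j‖ / ‖x t i - x t j‖) * ⟪x t i - x0, x t i - x t j⟫)
      = -(2/(N:ℝ)) * ∑ j ∈ Finset.univ.erase i,
        (g ‖x t i - x t j‖ / ‖x t i - x t j‖) * ⟪x t i - x0, x t i - x t j⟫ by ring]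
    have h2N : (0:ℝ) < 2/(N:ℝ) := by positivity
    have h5 := mul_le_mul_of_nonneg_left hsum_ge h2N.le
    have h6 : (2/(N:ℝ)) * (Om/2 * ((N:ℝ) * ‖x t i - x0‖)) = Om * ‖x t i - x0‖ := by
      field_simp
    rw [h6] at h5
    linarith
  -- Part 1 : pointwise derivative bound
  have part1 : ∀ (t : ℝ) (D : ℝ),
      HasDerivAt (fun s => (⨆ i : Fin N, ‖x s i - x0‖) ^ 2) D t →
        (1/2) * D ≤ -(Om / (2 * (N : ℝ))) * ⨆ i : Fin N, ‖x t i - x0‖ := by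
    intro t D hD
    obtain ⟨i, hi⟩ := hmaxR t
    have hmax : ∀ k, ‖x t k - x0‖ ≤ ‖x t i - x0‖ := fun k => (hle t k).trans hi.le
    have hDF : HasDerivAt F D t := hD
    have hFt : F t = ‖x t i - x0‖ ^ 2 := by rw [hFdef, ← hi]
    have hloc : IsLocalMax (fun s => ‖x s i - x0‖ ^ 2 - F s) t := by
      apply Filter.Eventually.of_forall
      intro s
      have h1 := hFf s i
      simp only
      linarith [hFt]
    have hz := hloc.hasDerivAt_eq_zero ((hderiv t i).sub hDF)
    have hDi : D = 2 * ⟪x t i - x0, v i t⟫ := by linarith [hz]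
    have hk := key t i hmax
    have hcoef : Om / (2 * (N:ℝ)) ≤ Om / 2 := by
      rw [div_le_div_iff₀ (by positivity) (by norm_num)]
      nlinarith [hOm, hN1]
    have h7 := mul_le_mul_of_nonneg_right hcoef (hR0 t)
    have hRt : (⨆ i : Fin N, ‖x t i - x0‖) = R t := rfl
    rw [hRt, ← hi] at *
    nlinarith [hk, hDi, h7, hi]
  -- slope condition for the comparison theorem
  have hslope : ∀ (t r : ℝ), -Om * Real.sqrt (F t) < r →
      ∃ᶠ z in nhdsWithin t (Set.Ioi t), slope F t z < r := by
    intro t r hr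
    have hpig : ∃ j : Fin N, ∃ᶠ z in nhdsWithin t (Set.Ioi t), R z = ‖x z j - x0‖ := by
      by_contra hcon
      push_neg at hcon
      have hev : ∀ᶠ z in nhdsWithin t (Set.Ioi t), ∀ j : Fin N, ¬ (R z = ‖x z j - x0‖) :=
        eventually_all.2 fun j => (hcon j)
      obtain ⟨z, hz⟩ := hev.exists
      obtain ⟨j, hj⟩ := hmaxR z
      exact hz j hj
    obtain ⟨j, hj⟩ := hpig
    have h1 : Filter.Tendsto (fun z => ‖x z j - x0‖) (nhdsWithin t (Set.Ioi t))
        (nhds ‖x t j - x0‖) := ((hxc j).tendsto t).mono_left nhdsWithin_le_nhds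
    have h2 : Filter.Tendsto R (nhdsWithin t (Set.Ioi t)) (nhds (R t)) :=
      (hRc.tendsto t).mono_left nhdsWithin_le_nhds
    have htj : R t = ‖x t j - x0‖ := tendsto_nhds_unique_of_frequently_eq h2 h1 hj
    have hmax : ∀ k, ‖x t k - x0‖ ≤ ‖x t j - x0‖ := fun k => (hle t k).trans htj.le
    have hk := key t j hmax
    have hsq : Real.sqrt (F t) = R t := by rw [hFdef]; exact Real.sqrt_sq (hR0 t)
    have hlt : 2 * ⟪x t j - x0, v j t⟫ < r := by
      rw [hsq, htj] at hr
      linarith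
    have hts : Filter.Tendsto (slope (fun s => ‖x s j - x0‖ ^ 2) t)
        (nhdsWithin t (Set.Ioi t)) (nhds (2 * ⟪x t j - x0, v j t⟫)) := by
      refine (hasDerivAt_iff_tendsto_slope.1 (hderiv t j)).mono_left
        (nhdsWithin_mono t fun z hz => ?_)
      exact Set.mem_compl_singleton_iff.2 (ne_of_gt hz)
    have hevs := hts.eventually_lt_const hlt
    refine (hj.and_eventually hevs).mono ?_
    rintro z ⟨hz1, hz2⟩
    have e1 : F z = ‖x z j - x0‖ ^ 2 := by rw [hFdef]; simp only; rw [hz1]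
    have e2 : F t = ‖x t j - x0‖ ^ 2 := by rw [hFdef]; simp only; rw [htj]
    rw [slope_def_field, e1, e2]
    rw [slope_def_field] at hz2
    exact hz2
  -- finite-time collapse
  refine ⟨Filter.Eventually.of_forall part1, 2 * Real.sqrt (F 0) / Om, ?_⟩
  intro t ht i
  set C := Real.sqrt (F 0) with hC
  have hC0 : 0 ≤ C := Real.sqrt_nonneg _
  have ht0 : (0:ℝ) ≤ t := le_trans (by positivity) ht
  have hkey : ∀ ε : ℝ, 0 < ε → F t ≤ ε * (1 + t) := by
    intro ε hε
    set B : ℝ → ℝ := fun u => (max (C - (Om/2) * u) 0) ^ 2 + ε * (1 + u) with hBdef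
    set B'' : ℝ → ℝ := fun s => -Om * max (C - (Om/2) * s) 0 + ε with hB2def
    have hBd : ∀ s : ℝ, HasDerivAt B (B'' s) s := by
      intro s
      have h1 := sq_max_hasDerivAt C (Om/2) s
      have h2 : HasDerivAt (fun u => ε * (1 + u)) ε s := by
        simpa using (((hasDerivAt_id s).const_add (1:ℝ)).const_mul ε)
      rw [hBdef, hB2def]
      exact (h1.add h2).congr_deriv (by ring)
    have hBc : ContinuousOn B (Set.Icc 0 t) := by
      refine Continuous.continuousOn (Continuous.add ?_ ?_)
      · exact ((continuous_const.sub (continuous_const.mul continuous_id)).max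
          continuous_const).pow 2
      · exact continuous_const.mul (continuous_const.add continuous_id)
    have ha0 : F 0 ≤ B 0 := by
      rw [hBdef]
      simp only [mul_zero, sub_zero, add_zero, mul_one]
      rw [max_eq_left hC0, hC, Real.sq_sqrt (hF0 0)]
      linarith
    have hbound : ∀ s ∈ Set.Ico 0 t, F s = B s → -Om * Real.sqrt (F s) < B'' s := by
      intro s hs hFB
      rw [hBdef] at hFB
      rw [hB2def]
      simp only at hFB ⊢
      set m := max (C - (Om/2) * s) 0 with hm
      have hm0 : 0 ≤ m := le_max_right _ _
      have hFs : m ^ 2 < F s := by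
        rw [hFB]
        have h1 : (0:ℝ) < ε * (1 + s) := by
          have := hs.1
          nlinarith
        linarith
      have hmlt : m < Real.sqrt (F s) := (Real.lt_sqrt hm0).2 hFs
      nlinarith [hOm, hmlt]
    have happ := image_le_of_liminf_slope_right_lt_deriv_boundary'
      (f' := fun s => -Om * Real.sqrt (F s))
      hFc.continuousOn (fun s _ r hr => hslope s r hr) ha0 hBc
      (fun s _ => (hBd s).hasDerivWithinAt) hbound (Set.right_mem_Icc.2 ht0)
    rw [hBdef] at happ
    simp only at happ
    have hmt : max (C - (Om/2) * t) 0 = 0 := by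
      apply max_eq_right
      rw [ge_iff_le, div_le_iff₀ hOm] at ht
      nlinarith [ht]
    rw [hmt] at happ
    simpa using happ
  have hFt0 : F t = 0 := by
    refine le_antisymm ?_ (hF0 t)
    by_contra hpos
    push_neg at hpos
    have h1 : (0:ℝ) < 1 + t := by linarith
    have h2 := hkey (F t / (2 * (1 + t))) (by positivity)
    have h3 : F t / (2 * (1 + t)) * (1 + t) = F t / 2 := by
      field_simp
    rw [h3] at h2
    linarith
  have hRt0 : R t = 0 := by
    have h4 : R t ^ 2 = 0 := hFt0
    exact (pow_eq_zero_iff two_ne_zero).mp h4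

  have h3 : ‖x t i - x0‖ = 0 := le_antisymm (hRt0 ▸ hle t i) (norm_nonneg _)
  rw [norm_eq_zero, sub_eq_zero] at h3
  exact h3
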